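/- Let a > 0 and assume g(r;a) > 0 for all r ∈ (0,∞). Then the function r ↦ g(r;a)^{1/(p-1)} is integrable on (0,∞), and both g(r;a) = w(r;a)/ρ(r) → 0 and f(r;a) = w'(r;a)/ρ(r) → 0 as r → ∞. -/

import Mathlib

open Real Set Filter MeasureTheory
open Topology

/-- `f` is a solution of the profile equation with parameter `a`:
`f` is C¹ on `[0,∞)` with derivative `f'`, the map `r ↦ |f'(r)|^{p-2} f'(r)` is C¹ on `[0,∞)`
with derivative `F'`, the ODE
`(|f'|^{p-2}f')'(r) + ((N-1)/r)(|f'|^{p-2}f')(r) + f(r) - |f'(r)|^{p-1} = 0` holds for `r > 0`,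
and `f 0 = a`, `f' 0 = 0`. -/
def IsProfileSol (N : ℕ) (p a : ℝ) (f f' F' : ℝ → ℝ) : Prop :=
  (∀ r ∈ Ici (0:ℝ), HasDerivWithinAt f (f' r) (Ici 0) r) ∧
  ContinuousOn f' (Ici 0) ∧
  (∀ r ∈ Ici (0:ℝ), HasDerivWithinAt (fun s => |f' s| ^ (p - 2) * f' s) (F' r) (Ici 0) r) ∧
  ContinuousOn F' (Ici 0) ∧
  (∀ r, 0 < r →
    F' r + (((N : ℝ) - 1) / r) * (|f' r| ^ (p - 2) * f' r) + f r - |f' r| ^ (p - 1) = 0) ∧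
  f 0 = a ∧ f' 0 = 0

/-- `g(r;a) = -|f'(r;a)|^{p-2} f'(r;a)`. -/
noncomputable def gFun (p : ℝ) (f' : ℝ → ℝ) (r : ℝ) : ℝ := -(|f' r| ^ (p - 2) * f' r)

/-- `ρ(r) = r^{N-1} e^r`. -/
noncomputable def rho (N : ℕ) (r : ℝ) : ℝ := r ^ (N - 1) * Real.exp r

/-- the derivative of `ρ`. -/
noncomputable def rho' (N : ℕ) (r : ℝ) : ℝ :=
  (((N : ℝ) - 1) * r ^ (N - 2) + r ^ (N - 1)) * Real.exp r

/-- `w(r;a) = ρ(r) g(r;a)`. -/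
noncomputable def wFun (N : ℕ) (p : ℝ) (f' : ℝ → ℝ) (r : ℝ) : ℝ := rho N r * gFun p f' r

/-- the derivative `w'(r;a) = ρ'(r) g(r;a) + ρ(r) g'(r;a)`, where `g' = -F'`. -/
noncomputable def wDeriv (N : ℕ) (p : ℝ) (f' F' : ℝ → ℝ) (r : ℝ) : ℝ :=
  rho' N r * gFun p f' r - rho N r * F' r

/- ## auxiliary lemmas -/

lemma my_antitoneOn_Ici {c : ℝ} {φ φ' : ℝ → ℝ} (hc : ContinuousOn φ (Ici c))
    (hd : ∀ x ∈ Ioi c, HasDerivAt φ (φ' x) x) (hn : ∀ x ∈ Ioi c, φ' x ≤ 0) :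
    AntitoneOn φ (Ici c) := by
  apply antitoneOn_of_deriv_nonpos (convex_Ici c) hc
  · rw [interior_Ici]
    exact fun x hx => (hd x hx).differentiableAt.differentiableWithinAt
  · rw [interior_Ici]
    intro x hx
    rw [(hd x hx).deriv]
    exact hn x hx

lemma my_monotoneOn_Ici {c : ℝ} {φ φ' : ℝ → ℝ} (hc : ContinuousOn φ (Ici c))
    (hd : ∀ x ∈ Ioi c, HasDerivAt φ (φ' x) x) (hn : ∀ x ∈ Ioi c, 0 ≤ φ' x) :
    MonotoneOn φ (Ici c) := by
  apply monotoneOn_of_deriv_nonneg (convex_Ici c) hc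
  · rw [interior_Ici]
    exact fun x hx => (hd x hx).differentiableAt.differentiableWithinAt
  · rw [interior_Ici]
    intro x hx
    rw [(hd x hx).deriv]
    exact hn x hx

lemma rho_hasDerivAt (n : ℕ) (r : ℝ) : HasDerivAt (rho (n+2)) (rho' (n+2) r) r := by
  have h1 : HasDerivAt (fun x : ℝ => x ^ (n+1)) ((↑(n+1)) * r ^ n) r := by
    simpa using hasDerivAt_pow (n+1) r
  have h2 := Real.hasDerivAt_exp r
  have h3 : HasDerivAt (fun x : ℝ => x ^ (n+1) * Real.exp x) _ r := h1.mul h2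
  convert h3 using 1
  · funext x; simp only [rho, show n + 2 - 1 = n + 1 by omega]
  simp only [rho', show n + 2 - 1 = n + 1 by omega, show n + 2 - 2 = n by omega]
  push_cast
  ring

lemma rho'_eq (n : ℕ) (r : ℝ) (hr : 0 < r) :
    rho' (n+2) r = rho (n+2) r + (((n:ℝ)+1) / r) * rho (n+2) r := by
  simp only [rho, rho', show n + 2 - 1 = n + 1 by omega, show n + 2 - 2 = n by omega]
  push_cast
  field_simp
  ring

lemma rho_pos (n : ℕ) (r : ℝ) (hr : 0 < r) : 0 < rho (n+2) r := by
  rw [rho]; positivity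

lemma rho_ge_exp (n : ℕ) (r : ℝ) (hr : 1 ≤ r) : Real.exp r ≤ rho (n+2) r := by
  rw [rho]
  nlinarith [one_le_pow₀ hr (n := n + 2 - 1), Real.exp_pos r]

lemma rho_gt_self (n : ℕ) (r : ℝ) (hr : 1 ≤ r) : r < rho (n+2) r :=
  lt_of_lt_of_le (lt_of_lt_of_le (by linarith) (Real.add_one_le_exp r)) (rho_ge_exp n r hr)

lemma rho_le_rho' (n : ℕ) (r : ℝ) (hr : 0 ≤ r) : rho (n+2) r ≤ rho' (n+2) r := by
  simp only [rho, rho', show n + 2 - 1 = n + 1 by omega, show n + 2 - 2 = n by omega]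
  push_cast
  nlinarith [mul_nonneg (mul_nonneg (by positivity : (0:ℝ) ≤ ((n:ℝ)+1)) (pow_nonneg hr n))
    (Real.exp_pos r).le]

lemma rho'_le_two_rho (n : ℕ) (r : ℝ) (hr : ((n:ℝ)+1) ≤ r) : rho' (n+2) r ≤ 2 * rho (n+2) r := by
  have hr0 : (0:ℝ) ≤ r := le_trans (by positivity) hr
  simp only [rho, rho', show n + 2 - 1 = n + 1 by omega, show n + 2 - 2 = n by omega]
  push_cast
  rw [pow_succ]
  nlinarith [mul_nonneg (mul_nonneg (pow_nonneg hr0 n) (sub_nonneg.2 hr)) (Real.exp_pos r).le]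


/-- if `g(·;a) > 0` on `(0,∞)`, then `g^{1/(p-1)}` is integrable on `(0,∞)`
and both `g(r;a) = w(r;a)/ρ(r) → 0` and `f(r;a) = w'(r;a)/ρ(r) → 0` as `r → ∞`. -/
theorem stmt9 (N : ℕ) (hN : 2 ≤ N) (p : ℝ)
    (hp1 : 2 * (N : ℝ) / ((N : ℝ) + 1) < p) (hp2 : p < 2)
    (a : ℝ) (ha : 0 < a)
    (f f' F' : ℝ → ℝ) (hf : IsProfileSol N p a f f' F')
    (hg : ∀ r, 0 < r → 0 < gFun p f' r) :
    MeasureTheory.IntegrableOn (fun r => gFun p f' r ^ (1 / (p - 1))) (Set.Ioi (0:ℝ)) ∧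
    Filter.Tendsto (gFun p f') Filter.atTop (nhds 0) ∧
    Filter.Tendsto f Filter.atTop (nhds 0) := by
  obtain ⟨n, rfl⟩ : ∃ n, N = n + 2 := ⟨N - 2, by omega⟩
  obtain ⟨hfd, hf'c, hFd, hF'c, hode, hf0, hf'0⟩ := hf
  -- p > 1
  have hp1' : 1 < p := by
    refine lt_trans ?_ hp1
    push_cast
    rw [lt_div_iff₀ (by positivity)]
    nlinarith [Nat.cast_nonneg (α := ℝ) n]
  -- f' < 0 on (0,∞)
  have hf'neg : ∀ r, 0 < r → f' r < 0 := by
    intro r hr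
    by_contra h
    push_neg at h
    have := hg r hr
    rw [gFun] at this
    nlinarith [Real.rpow_nonneg (abs_nonneg (f' r)) (p-2)]
  -- g = (-f')^(p-1)
  have habs : ∀ r, 0 < r → gFun p f' r = (-f' r) ^ (p-1) := by
    intro r hr
    rw [gFun, abs_of_neg (hf'neg r hr)]
    rw [show p - 1 = (p-2) + 1 by ring,
      Real.rpow_add_one (by linarith [hf'neg r hr] : -f' r ≠ 0)]
    ring
  -- g^{1/(p-1)} = -f'
  have hpow : ∀ r, 0 < r → gFun p f' r ^ (1/(p-1)) = -f' r := by
    intro r hr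
    rw [habs r hr, ← Real.rpow_mul (by linarith [hf'neg r hr] : (0:ℝ) ≤ -f' r), mul_one_div,
      div_self (by linarith : p - 1 ≠ 0), Real.rpow_one]
  have hfdAt : ∀ x ∈ Ioi (0:ℝ), HasDerivAt f (f' x) x :=
    fun x hx => (hfd x (mem_Ici.2 (le_of_lt hx))).hasDerivAt (Ici_mem_nhds hx)
  have hGdAt : ∀ x ∈ Ioi (0:ℝ), HasDerivAt (fun s => |f' s| ^ (p - 2) * f' s) (F' x) x :=
    fun x hx => (hFd x (mem_Ici.2 (le_of_lt hx))).hasDerivAt (Ici_mem_nhds hx)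
  have hfcont : ContinuousOn f (Ici 0) := fun x hx => (hfd x hx).continuousWithinAt
  -- derivative of w
  have hwdAt : ∀ x ∈ Ioi (0:ℝ), HasDerivAt (wFun (n+2) p f') (wDeriv (n+2) p f' F' x) x := by
    intro x hx
    have h := (rho_hasDerivAt n x).mul ((hGdAt x hx).neg)
    have e : wDeriv (n+2) p f' F' x
        = rho' (n+2) x * -(|f' x| ^ (p - 2) * f' x) + rho (n+2) x * -F' x := by
      simp only [wDeriv, gFun]; ring
    rw [e]
    exact h
  -- wDeriv = rho * f on (0,∞)
  have hwd_eq : ∀ x, 0 < x → wDeriv (n+2) p f' F' x = rho (n+2) x * f x := by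
    intro x hx
    have hode' := hode x hx
    have habs2 : |f' x| ^ (p-1) = -(|f' x| ^ (p - 2) * f' x) := by
      rw [abs_of_neg (hf'neg x hx), show p - 1 = (p-2) + 1 by ring,
        Real.rpow_add_one (by linarith [hf'neg x hx] : -f' x ≠ 0)]
      ring
    have hF : F' x = -(|f' x| ^ (p - 2) * f' x)
        - f x - ((((n:ℝ)+2) - 1)/x) * (|f' x| ^ (p - 2) * f' x) := by
      rw [← habs2]
      push_cast at hode' ⊢
      linarith
    simp only [wDeriv, gFun, hF]
    rw [rho'_eq n x hx]
    push_cast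
    field_simp
    ring
  -- w > 0 on (0,∞)
  have hwpos : ∀ x, 0 < x → 0 < wFun (n+2) p f' x :=
    fun x hx => mul_pos (rho_pos n x hx) (hg x hx)
  -- f antitone on [0,∞)
  have hfmono : AntitoneOn f (Ici 0) :=
    my_antitoneOn_Ici hfcont hfdAt (fun x hx => (hf'neg x hx).le)
  -- f ≥ 0 on [0,∞)
  have hfnonneg : ∀ r, 0 ≤ r → 0 ≤ f r := by
    by_contra hcon
    push_neg at hcon
    obtain ⟨r1, hr1, hfr1⟩ := hcon
    set c := f r1 with hc
    set r2 := max r1 1 with hr2def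
    have hr2one : (1:ℝ) ≤ r2 := le_max_right _ _
    have hr2pos : (0:ℝ) < r2 := by linarith
    have hfr2 : ∀ r, r2 ≤ r → f r ≤ c :=
      fun r hr => hfmono hr1 (le_trans (le_trans hr1 (le_max_left r1 1)) hr)
        (le_trans (le_max_left r1 1) hr)
    set φ := fun r => wFun (n+2) p f' r - c * Real.exp r with hφ
    have hφd : ∀ x ∈ Ioi r2, HasDerivAt φ (wDeriv (n+2) p f' F' x - c * Real.exp x) x := by
      intro x hx
      have hx0 : (0:ℝ) < x := lt_trans hr2pos hx
      exact (hwdAt x hx0).sub ((Real.hasDerivAt_exp x).const_mul c)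
    have hφc : ContinuousOn φ (Ici r2) := by
      intro x hx
      have hx0 : (0:ℝ) < x := lt_of_lt_of_le hr2pos hx
      exact ((hwdAt x hx0).sub ((Real.hasDerivAt_exp x).const_mul c)).continuousAt.continuousWithinAt
    have hφmono : AntitoneOn φ (Ici r2) := by
      refine my_antitoneOn_Ici hφc hφd ?_
      intro x hx
      have hx0 : (0:ℝ) < x := lt_trans hr2pos hx
      have h1 : wDeriv (n+2) p f' F' x = rho (n+2) x * f x := hwd_eq x hx0
      have h2 : rho (n+2) x * f x ≤ rho (n+2) x * c :=
        mul_le_mul_of_nonneg_left (hfr2 x (le_of_lt hx)) (rho_pos n x hx0).le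
      have h3 : rho (n+2) x * c ≤ Real.exp x * c :=
        mul_le_mul_of_nonpos_right (rho_ge_exp n x (le_trans hr2one (le_of_lt hx))) hfr1.le
      linarith
    set K := φ r2 with hK
    set r3 := max r2 (K / (-c)) with hr3
    have hr2r3 : r2 ≤ r3 := le_max_left _ _
    have h1 : φ r3 ≤ K := hφmono self_mem_Ici hr2r3 hr2r3
    have h2 : r3 < Real.exp r3 := by linarith [Real.add_one_le_exp r3]
    have h3 : K / (-c) < Real.exp r3 := lt_of_le_of_lt (le_max_right _ _) h2
    have h4 : K < (-c) * Real.exp r3 := by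
      rw [div_lt_iff₀ (by linarith : (0:ℝ) < -c)] at h3
      linarith [h3]
    have h5 : wFun (n+2) p f' r3 < 0 := by
      have : wFun (n+2) p f' r3 - c * Real.exp r3 ≤ K := h1
      nlinarith
    exact absurd (hwpos r3 (lt_of_lt_of_le hr2pos hr2r3)) (not_lt.2 h5.le)
  -- the limit L of f
  have hne : (f '' Ici 0).Nonempty := ⟨f 0, mem_image_of_mem f self_mem_Ici⟩
  have hlb : ∀ y ∈ f '' Ici 0, (0:ℝ) ≤ y := by
    rintro y ⟨x, hx, rfl⟩; exact hfnonneg x hx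
  have hbdd : BddBelow (f '' Ici 0) := ⟨0, hlb⟩
  set L := sInf (f '' Ici 0) with hLdef
  have hL0 : 0 ≤ L := le_csInf hne hlb
  have hLle : ∀ r, 0 ≤ r → L ≤ f r := fun r hr => csInf_le hbdd (mem_image_of_mem f hr)
  have hftend : Tendsto f atTop (𝓝 L) := by
    rw [Metric.tendsto_atTop]
    intro ε hε
    obtain ⟨y, ⟨x, hx, rfl⟩, hy⟩ := exists_lt_of_csInf_lt hne (lt_add_of_pos_right L hε)
    refine ⟨x, fun r hr => ?_⟩
    have h1 : L ≤ f r := hLle r (le_trans hx hr)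
    have h2 : f r ≤ f x := hfmono hx (le_trans hx hr) hr
    rw [Real.dist_eq, abs_lt]
    constructor <;> linarith
  -- L = 0
  have hLzero : L = 0 := by
    by_contra hL
    have hLpos : 0 < L := lt_of_le_of_ne hL0 (Ne.symm hL)
    set R0 : ℝ := (n:ℝ) + 2 with hR0def
    have hR0pos : (0:ℝ) < R0 := by positivity
    have hn0 : (0:ℝ) ≤ (n:ℝ) := Nat.cast_nonneg n
    have hR0one : (1:ℝ) ≤ R0 := by rw [hR0def]; linarith
    set ψ := fun r => wFun (n+2) p f' r - (L/2) * rho (n+2) r with hψ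
    have hψd : ∀ x ∈ Ioi R0, HasDerivAt ψ
        (wDeriv (n+2) p f' F' x - (L/2) * rho' (n+2) x) x := by
      intro x hx
      have hx0 : (0:ℝ) < x := lt_trans hR0pos hx
      exact (hwdAt x hx0).sub ((rho_hasDerivAt n x).const_mul (L/2))
    have hψc : ContinuousOn ψ (Ici R0) := by
      intro x hx
      have hx0 : (0:ℝ) < x := lt_of_lt_of_le hR0pos hx
      exact ((hwdAt x hx0).sub
        ((rho_hasDerivAt n x).const_mul (L/2))).continuousAt.continuousWithinAt
    have hψmono : MonotoneOn ψ (Ici R0) := by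
      refine my_monotoneOn_Ici hψc hψd ?_
      intro x hx
      have hx0 : (0:ℝ) < x := lt_trans hR0pos hx
      have h1 : wDeriv (n+2) p f' F' x = rho (n+2) x * f x := hwd_eq x hx0
      have h2 : rho (n+2) x * L ≤ rho (n+2) x * f x :=
        mul_le_mul_of_nonneg_left (hLle x hx0.le) (rho_pos n x hx0).le
      have h3 : rho' (n+2) x ≤ 2 * rho (n+2) x := by
        apply rho'_le_two_rho
        have : R0 ≤ x := hx.le
        rw [hR0def] at this
        linarith
      have h4 : (L/2) * rho' (n+2) x ≤ (L/2) * (2 * rho (n+2) x) :=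
        mul_le_mul_of_nonneg_left h3 (by linarith)
      linarith
    set K := ψ R0 with hKdef
    set δ := (L/4) ^ (1/(p-1)) with hδ
    have hδpos : 0 < δ := Real.rpow_pos_of_pos (by linarith) _
    set R1 := max R0 (4 * |K| / L) with hR1
    have hR0R1 : R0 ≤ R1 := le_max_left _ _
    have hR1pos : 0 < R1 := lt_of_lt_of_le hR0pos hR0R1
    have hgge : ∀ r, R1 ≤ r → L/4 ≤ gFun p f' r := by
      intro r hr
      have hrR0 : R0 ≤ r := le_trans hR0R1 hr
      have hr0 : 0 < r := lt_of_lt_of_le hR0pos hrR0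
      have h1 : K ≤ ψ r := hψmono self_mem_Ici hrR0 hrR0
      have hKr : 4 * |K| / L ≤ r := le_trans (le_max_right _ _) hr
      have hrr : r < rho (n+2) r := rho_gt_self n r (le_trans hR0one hrR0)
      have h2 : |K| ≤ rho (n+2) r * (L/4) := by
        rw [div_le_iff₀ (by linarith : (0:ℝ) < L)] at hKr
        nlinarith
      have h3 : rho (n+2) r * (L/4) ≤ rho (n+2) r * gFun p f' r := by
        have hψr : ψ r = rho (n+2) r * gFun p f' r - (L/2) * rho (n+2) r := rfl
        have hKabs : -|K| ≤ K := neg_abs_le K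
        clear_value K ψ L
        linarith
      exact le_of_mul_le_mul_left h3 (rho_pos n r hr0)
    have hf'le : ∀ r, R1 ≤ r → δ ≤ -f' r := by
      intro r hr
      have hr0 : 0 < r := lt_of_lt_of_le hR1pos hr
      have := Real.rpow_le_rpow (by linarith : (0:ℝ) ≤ L/4) (hgge r hr)
        (le_of_lt (one_div_pos.2 (by linarith : (0:ℝ) < p - 1)))
      rw [hpow r hr0] at this
      exact this
    set χ := fun r => f r + δ * r with hχ
    have hχd : ∀ x ∈ Ioi R1, HasDerivAt χ (f' x + δ) x := by
      intro x hx
      have hx0 : (0:ℝ) < x := lt_trans hR1pos hx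
      have h : HasDerivAt (fun y => f y + δ * y) (f' x + δ * 1) x :=
        (hfdAt x hx0).add ((hasDerivAt_id x).const_mul δ)
      rw [mul_one] at h
      exact h
    have hχc : ContinuousOn χ (Ici R1) := by
      intro x hx
      have hx0 : (0:ℝ) < x := lt_of_lt_of_le hR1pos hx
      exact ((hfdAt x hx0).continuousAt.add (by fun_prop)).continuousWithinAt
    have hχmono : AntitoneOn χ (Ici R1) := by
      refine my_antitoneOn_Ici hχc hχd ?_
      intro x hx
      have := hf'le x hx.le
      linarith
    set r4 := max R1 ((f R1 + δ * R1)/δ + 1) with hr4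
    have hR1r4 : R1 ≤ r4 := le_max_left _ _
    have h1 : χ r4 ≤ χ R1 := hχmono self_mem_Ici hR1r4 hR1r4
    have h2 : (f R1 + δ * R1)/δ + 1 ≤ r4 := le_max_right _ _
    have h3 : f R1 + δ * R1 < δ * r4 := by
      rw [div_add' _ _ _ (ne_of_gt hδpos)] at h2
      rw [div_le_iff₀ hδpos] at h2
      nlinarith
    have h4 : f r4 < 0 := by
      have : f r4 + δ * r4 ≤ f R1 + δ * R1 := h1
      linarith
    exact absurd (hfnonneg r4 (le_trans hR1pos.le hR1r4)) (not_le.2 h4)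
  have hftend0 : Tendsto f atTop (𝓝 0) := hLzero ▸ hftend
  -- g → 0
  have hgtend : Tendsto (gFun p f') atTop (𝓝 0) := by
    rw [Metric.tendsto_atTop]
    intro ε hε
    obtain ⟨R, hR⟩ := (Metric.tendsto_atTop.1 hftend0) (ε/2) (by linarith)
    set r1 := max R 1 with hr1def
    have hr1one : (1:ℝ) ≤ r1 := le_max_right _ _
    have hr1pos : (0:ℝ) < r1 := by linarith
    have hfr1 : f r1 < ε/2 := by
      have := hR r1 (le_max_left _ _)
      rw [Real.dist_eq, abs_lt] at this
      linarith [this.2, hfnonneg r1 hr1pos.le]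
    set c := f r1 with hcdef
    have hc0 : 0 ≤ c := hfnonneg r1 hr1pos.le
    set φ := fun r => wFun (n+2) p f' r - c * rho (n+2) r with hφ
    have hφd : ∀ x ∈ Ioi r1, HasDerivAt φ
        (wDeriv (n+2) p f' F' x - c * rho' (n+2) x) x := by
      intro x hx
      have hx0 : (0:ℝ) < x := lt_trans hr1pos hx
      exact (hwdAt x hx0).sub ((rho_hasDerivAt n x).const_mul c)
    have hφc : ContinuousOn φ (Ici r1) := by
      intro x hx
      have hx0 : (0:ℝ) < x := lt_of_lt_of_le hr1pos hx
      exact ((hwdAt x hx0).sub ((rho_hasDerivAt n x).const_mul c)).continuousAt.continuousWithinAt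
    have hφmono : AntitoneOn φ (Ici r1) := by
      refine my_antitoneOn_Ici hφc hφd ?_
      intro x hx
      have hx0 : (0:ℝ) < x := lt_trans hr1pos hx
      have h1 : wDeriv (n+2) p f' F' x = rho (n+2) x * f x := hwd_eq x hx0
      have h2 : rho (n+2) x * f x ≤ rho (n+2) x * c :=
        mul_le_mul_of_nonneg_left (hfmono hr1pos.le (le_trans hr1pos.le hx.le) hx.le)
          (rho_pos n x hx0).le
      have h3 : c * rho (n+2) x ≤ c * rho' (n+2) x :=
        mul_le_mul_of_nonneg_left (rho_le_rho' n x hx0.le) hc0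
      linarith
    set K := φ r1 with hKdef
    refine ⟨max r1 (2 * |K| / ε), fun r hr => ?_⟩
    have hrr1 : r1 ≤ r := le_trans (le_max_left _ _) hr
    have hr0 : 0 < r := lt_of_lt_of_le hr1pos hrr1
    have hρpos : 0 < rho (n+2) r := rho_pos n r hr0
    have h1 : φ r ≤ K := hφmono self_mem_Ici hrr1 hrr1
    have hrK : 2 * |K| / ε ≤ r := le_trans (le_max_right _ _) hr
    have hrr : r < rho (n+2) r := rho_gt_self n r (le_trans hr1one hrr1)
    have h2 : |K| < rho (n+2) r * (ε/2) := by
      rw [div_le_iff₀ (by linarith : (0:ℝ) < ε)] at hrK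
      nlinarith
    have h3 : rho (n+2) r * gFun p f' r < rho (n+2) r * ε := by
      have hφr : φ r = rho (n+2) r * gFun p f' r - c * rho (n+2) r := rfl
      have hKabs : K ≤ |K| := le_abs_self K
      have hcρ : c * rho (n+2) r ≤ (ε/2) * rho (n+2) r :=
        mul_le_mul_of_nonneg_right (by linarith) hρpos.le
      clear_value K φ c L
      linarith
    have h4 : gFun p f' r < ε := lt_of_mul_lt_mul_left h3 hρpos.le
    rw [Real.dist_eq, abs_lt]
    constructor
    · linarith [hg r hr0]
    · linarith
  -- integrability
  have hint : IntegrableOn f' (Ioi (0:ℝ)) :=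
    integrableOn_Ioi_deriv_of_nonpos ((hfd 0 self_mem_Ici).continuousWithinAt)
      hfdAt (fun x hx => (hf'neg x hx).le) hftend0
  have hint2 : IntegrableOn (fun r => -f' r) (Ioi (0:ℝ)) := hint.neg
  refine ⟨hint2.congr_fun (fun r hr => (hpow r hr).symm) measurableSet_Ioi, hgtend, hftend0⟩
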